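/- Let f(x) = (2π)^{−d/2} e^{−‖x‖²/2} be the standard Gaussian density on ℝ^d and fix β ≥ 1. Then for all x ∈ ℝ^d, ‖∇f(x)‖ ≤ β^{1/2} e^{−1/2} (2π)^{−d/(2β)} f(x)^{1 − 1/β}. -/

import Mathlib

open Real RealInnerProductSpace

lemma gauss_hasGradientAt (d : ℕ) (c : ℝ) (x : EuclideanSpace ℝ (Fin d)) :
    HasGradientAt (fun y : EuclideanSpace ℝ (Fin d) => c * Real.exp (-‖y‖ ^ 2 / 2))
      ((-(c * Real.exp (-‖x‖ ^ 2 / 2))) • x) x := by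
  rw [hasGradientAt_iff_hasFDerivAt]
  have h1 : HasFDerivAt (fun y : EuclideanSpace ℝ (Fin d) => (⟪y, y⟫ : ℝ))
      ((fderivInnerCLM ℝ (x, x)).comp ((ContinuousLinearMap.id ℝ _).prod (ContinuousLinearMap.id ℝ _))) x :=
    (hasFDerivAt_id x).inner ℝ (hasFDerivAt_id x)
  have h2 : HasDerivAt (fun t : ℝ => c * Real.exp (-t / 2))
      (c * Real.exp (-(⟪x, x⟫ : ℝ) / 2) * (-1/2)) ((⟪x, x⟫ : ℝ)) := by
    have := ((hasDerivAt_id ((⟪x, x⟫ : ℝ))).neg.div_const 2).exp.const_mul c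
    simpa [mul_assoc] using this
  have h3 := HasDerivAt.comp_hasFDerivAt (f := fun y : EuclideanSpace ℝ (Fin d) => (⟪y, y⟫ : ℝ)) x h2 h1
  have h4 : HasFDerivAt (fun y : EuclideanSpace ℝ (Fin d) => c * Real.exp (-‖y‖ ^ 2 / 2))
      ((c * Real.exp (-(⟪x, x⟫ : ℝ) / 2) * (-1/2)) • ((fderivInnerCLM ℝ (x, x)).comp ((ContinuousLinearMap.id ℝ _).prod (ContinuousLinearMap.id ℝ _)))) x := by
    convert h3 using 2 with y
    · rfl
    · rfl
    simp only [Function.comp_apply, real_inner_self_eq_norm_sq]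
  convert h4 using 1
  · rfl
  · rfl
  · rfl
  ext v
  simp only [InnerProductSpace.toDual_apply_apply, ContinuousLinearMap.smul_apply,
    ContinuousLinearMap.coe_comp', Function.comp_apply, ContinuousLinearMap.prod_apply,
    ContinuousLinearMap.coe_id', id_eq, fderivInnerCLM_apply, smul_eq_mul]
  rw [real_inner_smul_left, real_inner_comm v x, real_inner_self_eq_norm_sq]
  ring

lemma key_ineq (β r : ℝ) (hβ : 1 ≤ β) (hr : 0 ≤ r) :
    r ≤ β ^ ((1 : ℝ)/2) * Real.exp ((r ^ 2 / β - 1) / 2) := by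
  have hb0 : (0:ℝ) < β := lt_of_lt_of_le one_pos hβ
  have h1 : r ^ 2 / β ≤ Real.exp (r ^ 2 / β - 1) := by
    have := Real.add_one_le_exp (r ^ 2 / β - 1)
    linarith
  have h2 : r ^ 2 ≤ β * Real.exp (r ^ 2 / β - 1) := by
    rw [div_le_iff₀ hb0] at h1; linarith [h1]
  have hsq : (β ^ ((1 : ℝ)/2) * Real.exp ((r ^ 2 / β - 1) / 2)) ^ 2
      = β * Real.exp (r ^ 2 / β - 1) := by
    rw [mul_pow, ← Real.rpow_natCast (β ^ ((1:ℝ)/2)) 2, ← Real.rpow_mul hb0.le,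
      ← Real.rpow_natCast (Real.exp ((r ^ 2 / β - 1) / 2)) 2, ← Real.exp_mul]
    norm_num
  have hA : 0 ≤ β ^ ((1 : ℝ)/2) * Real.exp ((r ^ 2 / β - 1) / 2) := by positivity
  nlinarith [h2, hsq, hA, hr]

theorem stmt_18 (d : ℕ) (β : ℝ) (hβ : 1 ≤ β) (x : EuclideanSpace ℝ (Fin d)) :
    ‖gradient (fun y : EuclideanSpace ℝ (Fin d) =>
        (2 * Real.pi) ^ (-(d : ℝ) / 2) * Real.exp (-‖y‖ ^ 2 / 2)) x‖
      ≤ β ^ ((1 : ℝ) / 2) * Real.exp (-(1 : ℝ) / 2) * (2 * Real.pi) ^ (-(d : ℝ) / (2 * β))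
          * ((2 * Real.pi) ^ (-(d : ℝ) / 2) * Real.exp (-‖x‖ ^ 2 / 2)) ^ (1 - 1 / β) := by
  have hP : (0:ℝ) < 2 * Real.pi := by positivity
  have hb0 : (0:ℝ) < β := lt_of_lt_of_le one_pos hβ
  set c : ℝ := (2 * Real.pi) ^ (-(d : ℝ) / 2) with hc
  have hc0 : 0 < c := Real.rpow_pos_of_pos hP _
  set r : ℝ := ‖x‖ with hrdef
  have hr : 0 ≤ r := norm_nonneg x
  have hgrad := (gauss_hasGradientAt d c x).gradient
  rw [hgrad, norm_smul]
  have hE : (0:ℝ) < Real.exp (-r ^ 2 / 2) := Real.exp_pos _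
  have hRHS : β ^ ((1 : ℝ) / 2) * Real.exp (-(1 : ℝ) / 2) * (2 * Real.pi) ^ (-(d : ℝ) / (2 * β))
          * (c * Real.exp (-r ^ 2 / 2)) ^ (1 - 1 / β)
      = (c * Real.exp (-r ^ 2 / 2)) * (β ^ ((1 : ℝ)/2) * Real.exp ((r ^ 2 / β - 1) / 2)) := by
    rw [Real.mul_rpow hc0.le hE.le, hc, ← Real.rpow_mul hP.le, ← Real.exp_mul]
    have he : -(d : ℝ) / (2 * β) + -(d : ℝ) / 2 * (1 - 1 / β) = -(d : ℝ) / 2 := by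
      field_simp; ring
    have he2 : -(1:ℝ) / 2 + -r ^ 2 / 2 * (1 - 1 / β) = -r ^ 2 / 2 + (r ^ 2 / β - 1) / 2 := by
      field_simp; ring
    have h3 : (2 * Real.pi) ^ (-(d : ℝ) / (2 * β)) * (2 * Real.pi) ^ (-(d : ℝ) / 2 * (1 - 1 / β))
        = (2 * Real.pi) ^ (-(d : ℝ) / 2) := by
      rw [← Real.rpow_add hP, he]
    have h4 : Real.exp (-(1:ℝ) / 2) * Real.exp (-r ^ 2 / 2 * (1 - 1 / β))
        = Real.exp (-r ^ 2 / 2) * Real.exp ((r ^ 2 / β - 1) / 2) := by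
      rw [← Real.exp_add, ← Real.exp_add, he2]
    linear_combination (β ^ ((1:ℝ)/2) * Real.exp (-(1:ℝ)/2)
        * Real.exp (-r ^ 2 / 2 * (1 - 1 / β))) * h3
      + (β ^ ((1:ℝ)/2) * (2 * Real.pi) ^ (-(d : ℝ) / 2)) * h4
  rw [hRHS]
  have hnorm : ‖-(c * Real.exp (-r ^ 2 / 2))‖ = c * Real.exp (-r ^ 2 / 2) := by
    rw [norm_neg, Real.norm_eq_abs, abs_of_pos (by positivity)]
  rw [hnorm]
  exact mul_le_mul_of_nonneg_left (key_ineq β r hβ hr) (by positivity)
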